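/- arXiv:2310.17182 — 4 statements merged into one kernel-verified Lean document; each statement's English description precedes it below -/
import Mathlib

section
/- For all real numbers a < b and all λ ≥ 0, the integral over (a,b) of e^{-λx} / sqrt((b-x)(x-a)) dx equals e^{-λ(b+a)/2} times the integral over (0,π) of e^{(λ(b-a)/2) cos θ} dθ. -/
open MeasureTheory Real Set

theorem integral_exp_div_sqrt_eq (a b : ℝ) (hab : a < b) (lam : ℝ) (hlam : 0 ≤ lam) :
    (∫ x in Set.Ioo a b, Real.exp (-lam * x) / Real.sqrt ((b - x) * (x - a)))
      = Real.exp (-(lam * (b + a)) / 2)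
        * ∫ θ in Set.Ioo 0 Real.pi, Real.exp (lam * (b - a) / 2 * Real.cos θ) := by
  set r : ℝ := (b - a) / 2 with hr_def
  set m : ℝ := (a + b) / 2 with hm_def
  have hr : 0 < r := by simp [hr_def]; linarith
  set g : ℝ → ℝ := fun θ => m - r * Real.cos θ with hg_def
  have hderiv : ∀ θ ∈ Ioo 0 Real.pi,
      HasDerivWithinAt g (r * Real.sin θ) (Ioo 0 Real.pi) θ := by
    intro θ _
    have h := ((Real.hasDerivAt_cos θ).const_mul r).const_sub m
    simpa [mul_neg] using h.hasDerivWithinAt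
  have hinj : Set.InjOn g (Ioo 0 Real.pi) := by
    intro x hx y hy h
    have hx' : x ∈ Icc 0 Real.pi := ⟨le_of_lt hx.1, le_of_lt hx.2⟩
    have hy' : y ∈ Icc 0 Real.pi := ⟨le_of_lt hy.1, le_of_lt hy.2⟩
    have : Real.cos x = Real.cos y := by
      have hrne : r ≠ 0 := ne_of_gt hr
      have h' : m - r * Real.cos x = m - r * Real.cos y := h
      have h'' : r * Real.cos x = r * Real.cos y := by linarith
      exact mul_left_cancel₀ hrne h''
    exact Real.injOn_cos hx' hy' this
  have himg : g '' Ioo 0 Real.pi = Ioo a b := by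
    ext x
    constructor
    · rintro ⟨θ, hθ, rfl⟩
      have h1 : Real.cos θ < Real.cos 0 :=
        Real.strictAntiOn_cos ⟨le_refl 0, le_of_lt (lt_trans hθ.1 hθ.2)⟩
          ⟨le_of_lt hθ.1, le_of_lt hθ.2⟩ hθ.1
      have h2 : Real.cos Real.pi < Real.cos θ :=
        Real.strictAntiOn_cos ⟨le_of_lt hθ.1, le_of_lt hθ.2⟩
          ⟨le_of_lt (lt_trans hθ.1 hθ.2), le_refl _⟩ hθ.2
      rw [Real.cos_zero] at h1
      rw [Real.cos_pi] at h2
      constructor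
      · show a < m - r * Real.cos θ
        nlinarith
      · show m - r * Real.cos θ < b
        nlinarith
    · rintro ⟨hax, hxb⟩
      have h1 : -1 < (m - x) / r := by
        rw [neg_lt, ← neg_div, div_lt_one hr]; simp [hm_def, hr_def]; linarith
      have h2 : (m - x) / r < 1 := by
        rw [div_lt_one hr]; simp [hm_def, hr_def]; linarith
      refine ⟨Real.arccos ((m - x) / r), ⟨?_, ?_⟩, ?_⟩
      · exact Real.arccos_pos.mpr h2
      · refine lt_of_le_of_ne (Real.arccos_le_pi _) (fun h => ?_)
        have := Real.arccos_eq_pi.mp h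
        linarith
      · show m - r * Real.cos _ = x
        rw [Real.cos_arccos (le_of_lt h1) (le_of_lt h2)]
        field_simp
        ring
  calc (∫ x in Set.Ioo a b, Real.exp (-lam * x) / Real.sqrt ((b - x) * (x - a)))
      = ∫ x in g '' Ioo 0 Real.pi, Real.exp (-lam * x) / Real.sqrt ((b - x) * (x - a)) := by
        rw [himg]
    _ = ∫ θ in Ioo 0 Real.pi,
          |r * Real.sin θ| • (Real.exp (-lam * g θ) / Real.sqrt ((b - g θ) * (g θ - a))) :=
        integral_image_eq_integral_abs_deriv_smul measurableSet_Ioo hderiv hinj _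
    _ = ∫ θ in Ioo 0 Real.pi,
          Real.exp (-(lam * (b + a)) / 2) * Real.exp (lam * (b - a) / 2 * Real.cos θ) := by
        apply setIntegral_congr_fun measurableSet_Ioo
        intro θ hθ
        have hsin : 0 < Real.sin θ := Real.sin_pos_of_pos_of_lt_pi hθ.1 hθ.2
        have hrs : 0 < r * Real.sin θ := mul_pos hr hsin
        have hprod : (b - g θ) * (g θ - a) = (r * Real.sin θ) ^ 2 := by
          have hsc := Real.sin_sq_add_cos_sq θ
          simp only [hg_def, hm_def, hr_def]
          linear_combination (-(((b - a) / 2) ^ 2)) * hsc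
        have hsqrt : Real.sqrt ((b - g θ) * (g θ - a)) = r * Real.sin θ := by
          rw [hprod, Real.sqrt_sq (le_of_lt hrs)]
        simp only [hsqrt, smul_eq_mul, abs_of_pos hrs]
        rw [mul_div_assoc', mul_comm, mul_div_assoc, div_self (ne_of_gt hrs), mul_one]
        rw [← Real.exp_add]
        congr 1
        simp only [hg_def, hm_def, hr_def]
        ring
    _ = Real.exp (-(lam * (b + a)) / 2)
        * ∫ θ in Set.Ioo 0 Real.pi, Real.exp (lam * (b - a) / 2 * Real.cos θ) := by
        rw [integral_const_mul]
end

section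
/- For all real numbers a < b and all λ > 0, the integral over (a,b) of e^{-λx} / sqrt((b-x)(x-a)) dx is at most sqrt(π³ / (4λ(b-a))) · e^{-λa}. -/
open MeasureTheory Real Set

theorem integral_exp_div_sqrt_le (a b : ℝ) (hab : a < b) (lam : ℝ) (hlam : 0 < lam) :
    (∫ x in Set.Ioo a b, Real.exp (-lam * x) / Real.sqrt ((b - x) * (x - a)))
      ≤ Real.sqrt (Real.pi ^ 3 / (4 * lam * (b - a))) * Real.exp (-lam * a) := by
  have hba : 0 < b - a := sub_pos.2 hab
  set c : ℝ := (b - a) / 2 with hc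
  have hc0 : 0 < c := by positivity
  set φ : ℝ → ℝ := fun θ => a + c * (1 - Real.cos θ) with hφ
  -- strict monotonicity of φ on Icc 0 π
  have hmono : StrictMonoOn φ (Icc 0 Real.pi) := by
    intro x hx y hy hxy
    have := Real.strictAntiOn_cos hx hy hxy
    simp only [hφ]
    nlinarith
  -- derivative
  have hderiv : ∀ θ : ℝ, HasDerivAt φ (c * Real.sin θ) θ := by
    intro θ
    have h := ((Real.hasDerivAt_cos θ).const_sub 1).const_mul c
    have h2 := h.const_add a
    rw [show c * Real.sin θ = c * - -Real.sin θ by ring]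
    exact h2
  -- image
  have hφ0 : φ 0 = a := by simp [hφ]
  have hφπ : φ Real.pi = b := by simp [hφ, Real.cos_pi, hc]; ring
  have himg : φ '' Ioo 0 Real.pi = Ioo a b := by
    apply Subset.antisymm
    · rintro _ ⟨θ, hθ, rfl⟩
      constructor
      · have := hmono (left_mem_Icc.2 Real.pi_pos.le) ⟨hθ.1.le, hθ.2.le⟩ hθ.1
        rwa [hφ0] at this
      · have := hmono ⟨hθ.1.le, hθ.2.le⟩ (right_mem_Icc.2 Real.pi_pos.le) hθ.2
        rwa [hφπ] at this
    · have hcont : ContinuousOn φ (Icc 0 Real.pi) := by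
        apply Continuous.continuousOn; fun_prop
      have := intermediate_value_Ioo Real.pi_pos.le hcont
      rw [hφ0, hφπ] at this
      exact this
  have hinj : InjOn φ (Ioo 0 Real.pi) :=
    (hmono.injOn).mono Ioo_subset_Icc_self
  have hms : MeasurableSet (Ioo (0:ℝ) Real.pi) := measurableSet_Ioo
  have hcov := integral_image_eq_integral_abs_deriv_smul hms
    (fun θ _ => (hderiv θ).hasDerivWithinAt) hinj
    (fun x => Real.exp (-lam * x) / Real.sqrt ((b - x) * (x - a)))
  rw [himg] at hcov
  rw [hcov]
  -- simplify the transformed integrand on Ioo 0 π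
  have hsimp : ∀ θ ∈ Ioo (0:ℝ) Real.pi,
      |c * Real.sin θ| • (Real.exp (-lam * φ θ) / Real.sqrt ((b - φ θ) * (φ θ - a)))
        = Real.exp (-lam * φ θ) := by
    intro θ hθ
    have hsin : 0 < Real.sin θ := Real.sin_pos_of_pos_of_lt_pi hθ.1 hθ.2
    have hprod : (b - φ θ) * (φ θ - a) = (c * Real.sin θ) ^ 2 := by
      have hpc := Real.sin_sq_add_cos_sq θ
      simp only [hφ, hc]
      linear_combination (-((b-a)/2)^2) * hpc
    rw [hprod, Real.sqrt_sq (by positivity), abs_of_pos (by positivity)]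
    rw [smul_eq_mul]
    field_simp
  rw [setIntegral_congr_fun hms hsimp]
  -- pointwise bound by a gaussian
  set k : ℝ := lam * (b - a) / Real.pi ^ 2 with hk
  have hk0 : 0 < k := by positivity
  have hint1 : IntegrableOn (fun θ => Real.exp (-lam * φ θ)) (Ioo 0 Real.pi) := by
    have : ContinuousOn (fun θ => Real.exp (-lam * φ θ)) (Icc 0 Real.pi) := by
      apply Continuous.continuousOn; fun_prop
    exact (this.integrableOn_compact isCompact_Icc).mono_set Ioo_subset_Icc_self
  have hgauss_int : Integrable (fun θ : ℝ => Real.exp (-k * θ ^ 2)) :=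
    integrable_exp_neg_mul_sq hk0
  have hint2 : IntegrableOn (fun θ => Real.exp (-lam * a) * Real.exp (-k * θ ^ 2))
      (Ioo 0 Real.pi) := (hgauss_int.const_mul _).integrableOn
  have hstep : (∫ θ in Ioo (0:ℝ) Real.pi, Real.exp (-lam * φ θ))
      ≤ ∫ θ in Ioo (0:ℝ) Real.pi, Real.exp (-lam * a) * Real.exp (-k * θ ^ 2) := by
    apply setIntegral_mono_on hint1 hint2 hms
    intro θ hθ
    rw [← Real.exp_add]
    apply Real.exp_le_exp.2
    have habs : |θ| ≤ Real.pi := by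
      rw [abs_of_nonneg hθ.1.le]; exact hθ.2.le
    have hcos := Real.cos_le_one_sub_mul_cos_sq habs
    have hπ : (0:ℝ) < Real.pi ^ 2 := by positivity
    -- need : -lam * φ θ ≤ -lam * a + -k * θ^2
    simp only [hφ, hk, hc]
    have hπ0 : (Real.pi : ℝ) ≠ 0 := Real.pi_ne_zero
    have h2 : 2 / Real.pi ^ 2 * θ ^ 2 ≤ 1 - Real.cos θ := by linarith
    have key : lam * (b - a) / Real.pi ^ 2 * θ ^ 2
        ≤ lam * ((b - a) / 2 * (1 - Real.cos θ)) := by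
      calc lam * (b - a) / Real.pi ^ 2 * θ ^ 2
          = lam * (b - a) / 2 * (2 / Real.pi ^ 2 * θ ^ 2) := by
            field_simp
        _ ≤ lam * (b - a) / 2 * (1 - Real.cos θ) :=
            mul_le_mul_of_nonneg_left h2 (by positivity)
        _ = lam * ((b - a) / 2 * (1 - Real.cos θ)) := by ring
    linarith [key]
  refine hstep.trans ?_
  rw [MeasureTheory.integral_const_mul]
  have hsub : (∫ θ in Ioo (0:ℝ) Real.pi, Real.exp (-k * θ ^ 2))
      ≤ ∫ θ in Ioi (0:ℝ), Real.exp (-k * θ ^ 2) := by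
    apply setIntegral_mono_set hgauss_int.integrableOn
    · filter_upwards with x using Real.exp_nonneg _
    · exact HasSubset.Subset.eventuallyLE Ioo_subset_Ioi_self
  have hval : (∫ θ in Ioi (0:ℝ), Real.exp (-k * θ ^ 2)) = Real.sqrt (Real.pi / k) / 2 :=
    integral_gaussian_Ioi k
  have hfin : Real.exp (-lam * a) * (Real.sqrt (Real.pi / k) / 2)
      = Real.sqrt (Real.pi ^ 3 / (4 * lam * (b - a))) * Real.exp (-lam * a) := by
    have hπ0 : (Real.pi : ℝ) ≠ 0 := Real.pi_ne_zero
    have h4 : Real.pi ^ 3 / (4 * lam * (b - a)) = (Real.pi / k) / 4 := by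
      rw [hk]; field_simp
    have h5 : Real.sqrt ((Real.pi / k) / 4) = Real.sqrt (Real.pi / k) / 2 := by
      rw [Real.sqrt_div (by positivity : (0:ℝ) ≤ Real.pi / k),
        show (4:ℝ) = 2 ^ 2 by norm_num, Real.sqrt_sq (by norm_num : (0:ℝ) ≤ 2)]
    rw [h4, h5]; ring
  calc Real.exp (-lam * a) * ∫ θ in Ioo (0:ℝ) Real.pi, Real.exp (-k * θ ^ 2)
      ≤ Real.exp (-lam * a) * (Real.sqrt (Real.pi / k) / 2) := by
        rw [← hval]
        exact mul_le_mul_of_nonneg_left hsub (Real.exp_nonneg _)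
    _ = _ := hfin
end

section
/- Suppose g : O → ℝ, h : [0,T] × O → ℝ, V : [0,T] × O → (0,∞) are measurable, X and Z are measurable stochastic processes with E[V(s, X^x_{t,s}) ⦀Z^x_{t,s}⦀] ≤ (c/√(s−t)) V(t,x) for all 0 ≤ t < s ≤ T and x ∈ O, and there is α ≥ 0 with |g(x)| ≤ α V(T,x) and |h(t,x)| √(T−t) ≤ α V(t,x) for all t ∈ [0,T), x ∈ O. Then for all t ∈ [0,T) and x ∈ O: E[|g(X^x_{t,T})| ⦀Z^x_{t,T}⦀ + ∫_t^T |h(r, X^x_{t,r})| ⦀Z^x_{t,r}⦀ dr] ≤ α c (1/√(T−t) + π) V(t,x) < ∞. -/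
open MeasureTheory Real Set intervalIntegral

lemma sqrt_int_integrable {a b : ℝ} (hab : a < b) :
    IntervalIntegrable (fun r => 1 / (Real.sqrt (b - r) * Real.sqrt (r - a))) volume a b := by
  have hmeas : Measurable (fun r => 1 / (Real.sqrt (b - r) * Real.sqrt (r - a))) := by
    fun_prop
  set mid := (a + b) / 2 with hmid
  have ham : a < mid := by simp only [hmid]; linarith
  have hmb : mid < b := by simp only [hmid]; linarith
  have hb_ne : ∀ᵐ (r : ℝ) ∂volume, r ≠ b := by
    refine ae_iff.2 ?_
    simpa using measure_singleton b
  have h1 : IntervalIntegrable (fun r => 1 / (Real.sqrt (b - r) * Real.sqrt (r - a))) volume a mid := by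
    have hint : IntervalIntegrable (fun r => (1 / Real.sqrt (b - mid)) * ((r - a) ^ (-(1/2) : ℝ))) volume a mid := by
      have := (intervalIntegrable_rpow' (a := 0) (b := mid - a) (r := -(1/2)) (by norm_num)).comp_sub_right a
      simpa using this.const_mul (1 / Real.sqrt (b - mid))
    rw [intervalIntegrable_iff_integrableOn_Ioc_of_le ham.le] at hint ⊢
    refine hint.integrable.mono hmeas.aestronglyMeasurable.restrict ?_
    filter_upwards [ae_restrict_mem measurableSet_Ioc] with r hr
    obtain ⟨hr1, hr2⟩ := hr
    have hra : 0 < r - a := by linarith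
    have hbr : 0 < b - r := by linarith
    have hbm : 0 < b - mid := by linarith
    rw [Real.norm_eq_abs, Real.norm_eq_abs,
      abs_of_nonneg (by positivity), abs_of_nonneg (by positivity),
      Real.rpow_neg hra.le, ← Real.sqrt_eq_rpow, ← one_div, div_mul_div_comm, one_mul]
    apply one_div_le_one_div_of_le (by positivity)
    gcongr
  have h2 : IntervalIntegrable (fun r => 1 / (Real.sqrt (b - r) * Real.sqrt (r - a))) volume mid b := by
    have hint : IntervalIntegrable (fun r => (1 / Real.sqrt (mid - a)) * ((b - r) ^ (-(1/2) : ℝ))) volume mid b := by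
      have := (intervalIntegrable_rpow' (a := 0) (b := b - mid) (r := -(1/2)) (by norm_num)).comp_sub_left b
      simpa using (this.const_mul (1 / Real.sqrt (mid - a))).symm
    rw [intervalIntegrable_iff_integrableOn_Ioc_of_le hmb.le] at hint ⊢
    refine hint.integrable.mono hmeas.aestronglyMeasurable.restrict ?_
    filter_upwards [ae_restrict_mem measurableSet_Ioc, ae_restrict_of_ae hb_ne] with r hr hrb
    obtain ⟨hr1, hr2⟩ := hr
    have hra : 0 < r - a := by linarith
    have hbr : 0 < b - r := by rcases lt_or_eq_of_le hr2 with h | h; · linarith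
                               · exact absurd h hrb
    have hma : 0 < mid - a := by linarith
    rw [Real.norm_eq_abs, Real.norm_eq_abs,
      abs_of_nonneg (by positivity), abs_of_nonneg (by positivity),
      Real.rpow_neg hbr.le, ← Real.sqrt_eq_rpow, ← one_div, div_mul_div_comm, one_mul]
    apply one_div_le_one_div_of_le (by positivity)
    rw [mul_comm (Real.sqrt (mid - a))]
    gcongr
  exact h1.trans h2

lemma sqrt_int_eq_pi {a b : ℝ} (hab : a < b) :
    ∫ r in a..b, 1 / (Real.sqrt (b - r) * Real.sqrt (r - a)) = π := by
  have hba : 0 < b - a := by linarith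
  set F : ℝ → ℝ := fun r => Real.arcsin ((2 * r - a - b) / (b - a)) with hF
  have hderiv : ∀ r ∈ Ioo a b, HasDerivAt F (1 / (Real.sqrt (b - r) * Real.sqrt (r - a))) r := by
    intro r hr
    have hra : 0 < r - a := by linarith [hr.1]
    have hbr : 0 < b - r := by linarith [hr.2]
    have hu : HasDerivAt (fun r => (2 * r - a - b) / (b - a)) (2 / (b - a)) r := by
      have : HasDerivAt (fun r : ℝ => 2 * r - a - b) 2 r := by
        simpa using (((hasDerivAt_id r).const_mul 2).sub_const a).sub_const b
      simpa using this.div_const (b - a)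
    have hne1 : (2 * r - a - b) / (b - a) ≠ -1 := by
      intro hcon; rw [div_eq_iff hba.ne'] at hcon; nlinarith
    have hne2 : (2 * r - a - b) / (b - a) ≠ 1 := by
      intro hcon; rw [div_eq_iff hba.ne'] at hcon; nlinarith
    have := (Real.hasDerivAt_arcsin hne1 hne2).comp r hu
    refine this.congr_deriv ?_
    have h1 : 1 - ((2 * r - a - b) / (b - a)) ^ 2 = 4 * ((b - r) * (r - a)) / (b - a) ^ 2 := by
      field_simp; ring
    rw [h1, Real.sqrt_div (by positivity), Real.sqrt_sq hba.le]
    have h4 : Real.sqrt (4 * ((b - r) * (r - a))) = 2 * Real.sqrt ((b - r) * (r - a)) := by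
      rw [show (4:ℝ) * ((b - r) * (r - a)) = (2 * Real.sqrt ((b-r)*(r-a)))^2 by
        rw [mul_pow, Real.sq_sqrt (by positivity)]; ring]
      exact Real.sqrt_sq (by positivity)
    rw [h4, Real.sqrt_mul hbr.le]
    have hs : 0 < Real.sqrt (b - r) * Real.sqrt (r - a) := by positivity
    field_simp
  have hcont : ContinuousOn F (Icc a b) := by
    apply Real.continuous_arcsin.comp_continuousOn
    fun_prop
  have := intervalIntegral.integral_eq_sub_of_hasDerivAt_of_le hab.le hcont hderiv
    (sqrt_int_integrable hab)
  rw [this]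
  have hFb : F b = π / 2 := by
    simp only [hF]
    rw [show (2 * b - a - b) / (b - a) = 1 by field_simp; ring, Real.arcsin_one]
  have hFa : F a = -(π / 2) := by
    simp only [hF]
    rw [show (2 * a - a - b) / (b - a) = -1 by field_simp; ring, Real.arcsin_neg_one]
  rw [hFb, hFa]; ring

theorem sfpe_integrability (d m : ℕ) (c T : ℝ) (hc : 0 < c) (hT : 0 < T)
    (O : Set (EuclideanSpace ℝ (Fin d))) (hO : IsOpen O) (hOne : O.Nonempty)
    {Ω : Type*} [MeasurableSpace Ω] (P : Measure Ω) [IsProbabilityMeasure P]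
    (X : ℝ → EuclideanSpace ℝ (Fin d) → ℝ → Ω → EuclideanSpace ℝ (Fin d))
    (Z : ℝ → EuclideanSpace ℝ (Fin d) → ℝ → Ω → EuclideanSpace ℝ (Fin m))
    (hXO : ∀ t x s ω, X t x s ω ∈ O)
    (hXmeas : ∀ t x, Measurable (Function.uncurry (X t x)))
    (hZmeas : ∀ t x, Measurable (Function.uncurry (Z t x)))
    (g : EuclideanSpace ℝ (Fin d) → ℝ) (hg : Measurable g)
    (h : ℝ → EuclideanSpace ℝ (Fin d) → ℝ) (hh : Measurable (Function.uncurry h))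
    (V : ℝ → EuclideanSpace ℝ (Fin d) → ℝ) (hV : Measurable (Function.uncurry V))
    (hVpos : ∀ t x, 0 < V t x)
    (hmom : ∀ t s x, 0 ≤ t → t < s → s ≤ T → x ∈ O →
      (∫⁻ ω, ENNReal.ofReal (V s (X t x s ω) * ‖Z t x s ω‖) ∂P)
        ≤ ENNReal.ofReal (c / Real.sqrt (s - t) * V t x))
    (α : ℝ) (hα : 0 ≤ α)
    (hgb : ∀ x ∈ O, |g x| ≤ α * V T x)
    (hhb : ∀ t ∈ Set.Ico (0:ℝ) T, ∀ x ∈ O, |h t x| * Real.sqrt (T - t) ≤ α * V t x)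
    (t : ℝ) (ht : t ∈ Set.Ico (0:ℝ) T) (x : EuclideanSpace ℝ (Fin d)) (hx : x ∈ O) :
    (∫⁻ ω, (ENNReal.ofReal (|g (X t x T ω)| * ‖Z t x T ω‖)
        + ∫⁻ r in Set.Ioc t T, ENNReal.ofReal (|h r (X t x r ω)| * ‖Z t x r ω‖)) ∂P)
      ≤ ENNReal.ofReal (α * c * (1 / Real.sqrt (T - t) + Real.pi) * V t x)
    ∧ (∫⁻ ω, (ENNReal.ofReal (|g (X t x T ω)| * ‖Z t x T ω‖)
        + ∫⁻ r in Set.Ioc t T, ENNReal.ofReal (|h r (X t x r ω)| * ‖Z t x r ω‖)) ∂P) < ⊤ := by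
  obtain ⟨ht0, htT⟩ := ht
  have hXm : Measurable fun p : ℝ × Ω => X t x p.1 p.2 := hXmeas t x
  have hZm : Measurable fun p : ℝ × Ω => Z t x p.1 p.2 := hZmeas t x
  have hXT : Measurable fun ω => X t x T ω :=
    hXm.comp (measurable_const.prodMk measurable_id)
  have hZT : Measurable fun ω => Z t x T ω :=
    hZm.comp (measurable_const.prodMk measurable_id)
  have hV0 : 0 ≤ V t x := (hVpos t x).le
  have hacV : 0 ≤ α * c * V t x := mul_nonneg (mul_nonneg hα hc.le) hV0
  have hsqrtTt : 0 < Real.sqrt (T - t) := Real.sqrt_pos.2 (by linarith)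
  -- measurability of the first integrand
  have hf1 : Measurable fun ω => ENNReal.ofReal (|g (X t x T ω)| * ‖Z t x T ω‖) :=
    (((hg.comp hXT).abs.mul hZT.norm)).ennreal_ofReal
  -- measurability of the h-integrand on the product space
  have hF : Measurable fun p : ℝ × Ω =>
      ENNReal.ofReal (|h p.1 (X t x p.1 p.2)| * ‖Z t x p.1 p.2‖) := by
    have h1 : Measurable fun p : ℝ × Ω => h p.1 (X t x p.1 p.2) :=
      hh.comp (measurable_fst.prodMk hXm)
    exact (h1.abs.mul hZm.norm).ennreal_ofReal
  -- split the integral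
  rw [lintegral_add_left hf1]
  -- first term bound
  have I1 : (∫⁻ ω, ENNReal.ofReal (|g (X t x T ω)| * ‖Z t x T ω‖) ∂P)
      ≤ ENNReal.ofReal (α * (c / Real.sqrt (T - t) * V t x)) := by
    calc (∫⁻ ω, ENNReal.ofReal (|g (X t x T ω)| * ‖Z t x T ω‖) ∂P)
        ≤ ∫⁻ ω, ENNReal.ofReal α * ENNReal.ofReal (V T (X t x T ω) * ‖Z t x T ω‖) ∂P := by
          apply lintegral_mono
          intro ω
          dsimp only
          rw [← ENNReal.ofReal_mul hα]
          apply ENNReal.ofReal_le_ofReal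
          rw [← mul_assoc]
          exact mul_le_mul_of_nonneg_right (hgb _ (hXO t x T ω)) (norm_nonneg _)
      _ = ENNReal.ofReal α * ∫⁻ ω, ENNReal.ofReal (V T (X t x T ω) * ‖Z t x T ω‖) ∂P :=
          lintegral_const_mul' _ _ ENNReal.ofReal_ne_top
      _ ≤ ENNReal.ofReal α * ENNReal.ofReal (c / Real.sqrt (T - t) * V t x) := by
          gcongr
          exact hmom t T x ht0 htT le_rfl hx
      _ = ENNReal.ofReal (α * (c / Real.sqrt (T - t) * V t x)) :=
          (ENNReal.ofReal_mul hα).symm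
  -- second term bound
  have I2 : (∫⁻ ω, (∫⁻ r in Set.Ioc t T,
        ENNReal.ofReal (|h r (X t x r ω)| * ‖Z t x r ω‖)) ∂P)
      ≤ ENNReal.ofReal (α * c * V t x * π) := by
    have hswap : (∫⁻ ω, (∫⁻ r in Set.Ioc t T,
          ENNReal.ofReal (|h r (X t x r ω)| * ‖Z t x r ω‖)) ∂P)
        = ∫⁻ r in Set.Ioc t T, ∫⁻ ω,
            ENNReal.ofReal (|h r (X t x r ω)| * ‖Z t x r ω‖) ∂P := by
      apply lintegral_lintegral_swap
      exact (hF.comp measurable_swap).aemeasurable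
    rw [hswap]
    have key : ∀ᵐ r ∂(volume.restrict (Set.Ioc t T)),
        (∫⁻ ω, ENNReal.ofReal (|h r (X t x r ω)| * ‖Z t x r ω‖) ∂P)
          ≤ ENNReal.ofReal (α * c * V t x * (1 / (Real.sqrt (T - r) * Real.sqrt (r - t)))) := by
      have hT_ne : ∀ᵐ (r : ℝ) ∂volume, r ≠ T := by
        refine ae_iff.2 ?_; simpa using measure_singleton T
      filter_upwards [ae_restrict_mem measurableSet_Ioc, ae_restrict_of_ae hT_ne] with r hr hrT
      obtain ⟨hr1, hr2⟩ := hr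
      have hrT' : r < T := lt_of_le_of_ne hr2 hrT
      have hsT : 0 < Real.sqrt (T - r) := Real.sqrt_pos.2 (by linarith)
      have hst : 0 < Real.sqrt (r - t) := Real.sqrt_pos.2 (by linarith)
      calc (∫⁻ ω, ENNReal.ofReal (|h r (X t x r ω)| * ‖Z t x r ω‖) ∂P)
          ≤ ∫⁻ ω, ENNReal.ofReal (α / Real.sqrt (T - r))
              * ENNReal.ofReal (V r (X t x r ω) * ‖Z t x r ω‖) ∂P := by
            apply lintegral_mono
            intro ω
            dsimp only
            rw [← ENNReal.ofReal_mul (by positivity)]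
            apply ENNReal.ofReal_le_ofReal
            rw [← mul_assoc]
            refine mul_le_mul_of_nonneg_right ?_ (norm_nonneg _)
            rw [div_mul_eq_mul_div, le_div_iff₀ hsT]
            exact hhb r ⟨by linarith, hrT'⟩ _ (hXO t x r ω)
        _ = ENNReal.ofReal (α / Real.sqrt (T - r))
              * ∫⁻ ω, ENNReal.ofReal (V r (X t x r ω) * ‖Z t x r ω‖) ∂P :=
            lintegral_const_mul' _ _ ENNReal.ofReal_ne_top
        _ ≤ ENNReal.ofReal (α / Real.sqrt (T - r))
              * ENNReal.ofReal (c / Real.sqrt (r - t) * V t x) := by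
            gcongr
            exact hmom t r x ht0 hr1 hr2 hx
        _ = ENNReal.ofReal (α * c * V t x * (1 / (Real.sqrt (T - r) * Real.sqrt (r - t)))) := by
            rw [← ENNReal.ofReal_mul (by positivity)]
            congr 1
            field_simp
    calc (∫⁻ r in Set.Ioc t T, ∫⁻ ω,
          ENNReal.ofReal (|h r (X t x r ω)| * ‖Z t x r ω‖) ∂P)
        ≤ ∫⁻ r in Set.Ioc t T,
            ENNReal.ofReal (α * c * V t x * (1 / (Real.sqrt (T - r) * Real.sqrt (r - t)))) :=
          lintegral_mono_ae key
      _ = ENNReal.ofReal (α * c * V t x)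
            * ∫⁻ r in Set.Ioc t T,
                ENNReal.ofReal (1 / (Real.sqrt (T - r) * Real.sqrt (r - t))) := by
          simp_rw [ENNReal.ofReal_mul hacV]
          exact lintegral_const_mul' _ _ ENNReal.ofReal_ne_top
      _ = ENNReal.ofReal (α * c * V t x) * ENNReal.ofReal π := by
          congr 1
          rw [← ofReal_integral_eq_lintegral_ofReal]
          · rw [← intervalIntegral.integral_of_le htT.le, sqrt_int_eq_pi htT]
          · exact (intervalIntegrable_iff_integrableOn_Ioc_of_le htT.le).1
              (sqrt_int_integrable htT)
          · filter_upwards with r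
            positivity
      _ = ENNReal.ofReal (α * c * V t x * π) :=
          (ENNReal.ofReal_mul hacV).symm
  have hmain : (∫⁻ ω, ENNReal.ofReal (|g (X t x T ω)| * ‖Z t x T ω‖) ∂P)
      + (∫⁻ ω, (∫⁻ r in Set.Ioc t T,
          ENNReal.ofReal (|h r (X t x r ω)| * ‖Z t x r ω‖)) ∂P)
      ≤ ENNReal.ofReal (α * c * (1 / Real.sqrt (T - t) + π) * V t x) := by
    calc _ ≤ ENNReal.ofReal (α * (c / Real.sqrt (T - t) * V t x))
            + ENNReal.ofReal (α * c * V t x * π) := add_le_add I1 I2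
      _ = ENNReal.ofReal (α * c * (1 / Real.sqrt (T - t) + π) * V t x) := by
          rw [← ENNReal.ofReal_add (mul_nonneg hα (mul_nonneg (by positivity) hV0)) (mul_nonneg hacV Real.pi_nonneg)]
          congr 1
          field_simp
  exact ⟨hmain, lt_of_le_of_lt hmain ENNReal.ofReal_lt_top⟩
end

section
/- Assume the setting of abstract SFPEs with weight V and processes X, Z satisfying E[V(s, X^x_{t,s}) ⦀Z^x_{t,s}⦀] ≤ (c/√(s−t)) V(t,x). Let f : [0,T) × O × ℝ^m → ℝ be measurable and Lipschitz in the last variable with constant L; let v, w : [0,T) × O → ℝ^m be measurable with sup_{t,x} (⦀v(t,x)⦀ + ⦀w(t,x)⦀)/V(t,x) · √(T−t) < ∞. Then for all λ > 0, t ∈ [0,T), x ∈ O: E[∫_t^T |f(r, X^x_{t,r}, v(r, X^x_{t,r})) − f(r, X^x_{t,r}, w(r, X^x_{t,r}))| ⦀Z^x_{t,r}⦀ dr] ≤ cL √(π³/(4λ(T−t))) V(t,x) e^{−λt} · sup_{s,y} (e^{λs} ⦀v(s,y) − w(s,y)⦀ / V(s,y)) √(T−s). -/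
open MeasureTheory Real Set

lemma lintegral_image_deriv {s : Set ℝ} {f : ℝ → ℝ} {f' : ℝ → ℝ}
    (hs : MeasurableSet s) (hf' : ∀ x ∈ s, HasDerivWithinAt f (f' x) s x)
    (hf : Set.InjOn f s) (g : ℝ → ENNReal) :
    ∫⁻ x in f '' s, g x = ∫⁻ x in s, ENNReal.ofReal |f' x| * g (f x) := by
  simpa only [ContinuousLinearMap.det_toSpanSingleton] using
    lintegral_image_eq_lintegral_abs_det_fderiv_mul volume hs
      (fun x hx => (hf' x hx).hasFDerivWithinAt) hf g

lemma singular_bound (lam t T : ℝ) (hlam : 0 < lam) (htT : t < T) :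
    ∫⁻ r in Ioo t T,
        ENNReal.ofReal (Real.exp (-lam * r) / (Real.sqrt (r - t) * Real.sqrt (T - r)))
      ≤ ENNReal.ofReal (Real.sqrt (Real.pi ^ 3 / (4 * lam * (T - t))) * Real.exp (-lam * t)) := by
  have hτ : 0 < T - t := by linarith
  set τ := T - t with hτdef
  set φ : ℝ → ℝ := fun θ => t + τ * Real.sin θ ^ 2 with hφ
  set φ' : ℝ → ℝ := fun θ => τ * (2 * Real.sin θ ^ 1 * Real.cos θ) with hφ'
  have hπ := Real.pi_pos
  have himg : φ '' Ioo 0 (π / 2) = Ioo t T := by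
    ext r
    constructor
    · rintro ⟨θ, ⟨h0, h2⟩, rfl⟩
      have hs1 : 0 < Real.sin θ := Real.sin_pos_of_pos_of_lt_pi h0 (by linarith)
      have hs2 : Real.sin θ < 1 := by
        have := Real.strictMonoOn_sin ⟨by linarith, by linarith⟩
          ⟨by linarith, le_refl _⟩ h2
        rwa [Real.sin_pi_div_two] at this
      have hp2 : (0:ℝ) < Real.sin θ ^ 2 := pow_pos hs1 2
      have hl1 : Real.sin θ ^ 2 < 1 := by nlinarith
      constructor
      · simp only [hφ]; nlinarith
      · simp only [hφ]; nlinarith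
    · intro hr
      have hy00 : 0 < (r - t) / τ := div_pos (by linarith [hr.1]) hτ
      have hy11 : (r - t) / τ < 1 := (div_lt_one hτ).2 (by linarith [hr.2])
      set y := Real.sqrt ((r - t) / τ) with hy
      have hy0 : 0 < y := Real.sqrt_pos.2 hy00
      have hy1 : y < 1 := by
        rw [hy, show (1 : ℝ) = Real.sqrt 1 from Real.sqrt_one.symm]
        exact Real.sqrt_lt_sqrt hy00.le (by linarith)
      refine ⟨Real.arcsin y, ⟨Real.arcsin_pos.2 hy0, Real.arcsin_lt_pi_div_two.2 hy1⟩, ?_⟩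
      simp only [hφ]
      rw [Real.sin_arcsin (by linarith) hy1.le, hy, Real.sq_sqrt hy00.le]
      field_simp
      ring
  have hinj : Set.InjOn φ (Ioo 0 (π / 2)) := by
    intro a ha b hb hab
    have hsa : 0 < Real.sin a := Real.sin_pos_of_pos_of_lt_pi ha.1 (by linarith [ha.2])
    have hsb : 0 < Real.sin b := Real.sin_pos_of_pos_of_lt_pi hb.1 (by linarith [hb.2])
    have h1 : Real.sin a ^ 2 = Real.sin b ^ 2 := by
      have : τ * Real.sin a ^ 2 = τ * Real.sin b ^ 2 := by
        have := hab; simp only [hφ] at this; linarith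
      exact mul_left_cancel₀ hτ.ne' this
    have h2 : Real.sin a = Real.sin b := by nlinarith
    exact Real.injOn_sin ⟨by linarith [ha.1], ha.2.le⟩ ⟨by linarith [hb.1], hb.2.le⟩ h2
  have hderiv : ∀ θ ∈ Ioo (0 : ℝ) (π / 2), HasDerivWithinAt φ (φ' θ) (Ioo 0 (π / 2)) θ := by
    intro θ _
    have h := (((Real.hasDerivAt_sin θ).pow 2).const_mul τ).const_add t
    exact h.hasDerivWithinAt
  rw [← himg, lintegral_image_deriv measurableSet_Ioo hderiv hinj]
  set b : ℝ := 4 * lam * τ / π ^ 2 with hb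
  have hbpos : 0 < b := by positivity
  have key : ∀ θ ∈ Ioo (0 : ℝ) (π / 2),
      ENNReal.ofReal |φ' θ| *
        ENNReal.ofReal (Real.exp (-lam * φ θ) / (Real.sqrt (φ θ - t) * Real.sqrt (T - φ θ)))
      ≤ ENNReal.ofReal (2 * Real.exp (-lam * t)) * ENNReal.ofReal (Real.exp (-b * θ ^ 2)) := by
    intro θ hθ
    have hsθ : 0 < Real.sin θ := Real.sin_pos_of_pos_of_lt_pi hθ.1 (by linarith [hθ.2])
    have hcθ : 0 < Real.cos θ := Real.cos_pos_of_mem_Ioo ⟨by linarith [hθ.1], hθ.2⟩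
    have hphit : φ θ - t = τ * Real.sin θ ^ 2 := by simp [hφ]
    have hTphi : T - φ θ = τ * Real.cos θ ^ 2 := by
      have := Real.sin_sq_add_cos_sq θ
      simp only [hφ]; nlinarith
    have hsq1 : Real.sqrt (τ * Real.sin θ ^ 2) = Real.sqrt τ * Real.sin θ := by
      rw [Real.sqrt_mul hτ.le, Real.sqrt_sq hsθ.le]
    have hsq2 : Real.sqrt (τ * Real.cos θ ^ 2) = Real.sqrt τ * Real.cos θ := by
      rw [Real.sqrt_mul hτ.le, Real.sqrt_sq hcθ.le]
    have hφ'pos : 0 < φ' θ := by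
      simp only [hφ', pow_one]; positivity
    rw [← ENNReal.ofReal_mul (abs_nonneg _), ← ENNReal.ofReal_mul (by positivity)]
    apply ENNReal.ofReal_le_ofReal
    have heq : |φ' θ| * (Real.exp (-lam * φ θ) / (Real.sqrt (φ θ - t) * Real.sqrt (T - φ θ)))
        = 2 * Real.exp (-lam * t) * Real.exp (-(lam * τ) * Real.sin θ ^ 2) := by
      rw [abs_of_pos hφ'pos, hphit, hTphi, hsq1, hsq2]
      have hexp : Real.exp (-lam * φ θ)
          = Real.exp (-lam * t) * Real.exp (-(lam * τ) * Real.sin θ ^ 2) := by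
        rw [← Real.exp_add]; congr 1; simp only [hφ]; ring
      rw [hexp]
      have hst : Real.sqrt τ * Real.sqrt τ = τ := Real.mul_self_sqrt hτ.le
      have hd : Real.sqrt τ * Real.sin θ * (Real.sqrt τ * Real.cos θ)
          = τ * (Real.sin θ * Real.cos θ) := by
        linear_combination (Real.sin θ * Real.cos θ) * hst
      rw [hd]
      field_simp [hφ', hτ.ne', hsθ.ne', hcθ.ne']
      ring
    rw [heq]
    have hsθpos := hsθ
    have hjordan : b * θ ^ 2 ≤ lam * τ * Real.sin θ ^ 2 := by
      have hj := Real.mul_le_sin hθ.1.le hθ.2.le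
      have h2pθ : (0:ℝ) ≤ 2 / π * θ := mul_nonneg (by positivity) hθ.1.le
      have : (2 / π * θ) ^ 2 ≤ Real.sin θ ^ 2 := by
        apply sq_le_sq' _ hj
        linarith [hsθ]
      calc b * θ ^ 2 = lam * τ * (2 / π * θ) ^ 2 := by
            rw [hb]; field_simp; ring
        _ ≤ lam * τ * Real.sin θ ^ 2 := mul_le_mul_of_nonneg_left this (by positivity)
    have : Real.exp (-(lam * τ) * Real.sin θ ^ 2) ≤ Real.exp (-b * θ ^ 2) := by
      apply Real.exp_le_exp.2; nlinarith
    have hmul := mul_le_mul_of_nonneg_left this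
      (show (0:ℝ) ≤ 2 * Real.exp (-lam * t) by positivity)
    linarith
  calc ∫⁻ θ in Ioo (0:ℝ) (π/2), ENNReal.ofReal |φ' θ| *
        ENNReal.ofReal (Real.exp (-lam * φ θ) / (Real.sqrt (φ θ - t) * Real.sqrt (T - φ θ)))
      ≤ ∫⁻ θ in Ioo (0:ℝ) (π/2),
          ENNReal.ofReal (2 * Real.exp (-lam * t)) * ENNReal.ofReal (Real.exp (-b * θ ^ 2)) := by
        apply setLIntegral_mono
        · exact (measurable_const.mul ((Real.measurable_exp.comp
            ((measurable_const.mul (measurable_id.pow_const 2)))).ennreal_ofReal))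
        · exact key
    _ ≤ ∫⁻ θ in Ioi (0:ℝ),
          ENNReal.ofReal (2 * Real.exp (-lam * t)) * ENNReal.ofReal (Real.exp (-b * θ ^ 2)) :=
        lintegral_mono_set (Ioo_subset_Ioi_self)
    _ = ENNReal.ofReal (2 * Real.exp (-lam * t)) *
          ∫⁻ θ in Ioi (0:ℝ), ENNReal.ofReal (Real.exp (-b * θ ^ 2)) :=
        lintegral_const_mul' _ _ ENNReal.ofReal_ne_top
    _ = ENNReal.ofReal (2 * Real.exp (-lam * t)) * ENNReal.ofReal (Real.sqrt (π / b) / 2) := by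
        rw [← ofReal_integral_eq_lintegral_ofReal
          ((integrable_exp_neg_mul_sq hbpos).integrableOn)
          (Filter.Eventually.of_forall fun θ => (Real.exp_pos _).le),
          integral_gaussian_Ioi b]
    _ ≤ ENNReal.ofReal (Real.sqrt (π ^ 3 / (4 * lam * τ)) * Real.exp (-lam * t)) := by
        rw [← ENNReal.ofReal_mul (by positivity)]
        apply ENNReal.ofReal_le_ofReal
        have hpb : π / b = π ^ 3 / (4 * lam * τ) := by
          rw [hb]; field_simp
        rw [hpb]
        apply le_of_eq; ring

theorem sfpe_contractivity (d m : ℕ) (c L T : ℝ) (hc : 0 < c) (hL : 0 < L) (hT : 0 < T)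
    (O : Set (EuclideanSpace ℝ (Fin d))) (hO : IsOpen O) (hOne : O.Nonempty)
    {Ω : Type*} [MeasurableSpace Ω] (P : Measure Ω) [IsProbabilityMeasure P]
    (X : ℝ → EuclideanSpace ℝ (Fin d) → ℝ → Ω → EuclideanSpace ℝ (Fin d))
    (Z : ℝ → EuclideanSpace ℝ (Fin d) → ℝ → Ω → EuclideanSpace ℝ (Fin m))
    (hXO : ∀ t x s ω, X t x s ω ∈ O)
    (hXmeas : ∀ t x, Measurable (Function.uncurry (X t x)))
    (hZmeas : ∀ t x, Measurable (Function.uncurry (Z t x)))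
    (V : ℝ → EuclideanSpace ℝ (Fin d) → ℝ)
    (hVcont : ContinuousOn (Function.uncurry V) (Set.Icc 0 T ×ˢ O))
    (hVpos : ∀ t x, 0 < V t x)
    (hmom : ∀ t s x, 0 ≤ t → t < s → s ≤ T → x ∈ O →
      (∫⁻ ω, ENNReal.ofReal (V s (X t x s ω) * ‖Z t x s ω‖) ∂P)
        ≤ ENNReal.ofReal (c / Real.sqrt (s - t) * V t x))
    (f : ℝ → EuclideanSpace ℝ (Fin d) → EuclideanSpace ℝ (Fin m) → ℝ)
    (hfmeas : Measurable (fun p : ℝ × EuclideanSpace ℝ (Fin d) × EuclideanSpace ℝ (Fin m) =>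
      f p.1 p.2.1 p.2.2))
    (hLip : ∀ t ∈ Set.Ico (0:ℝ) T, ∀ x ∈ O, ∀ y z : EuclideanSpace ℝ (Fin m),
      |f t x y - f t x z| ≤ L * ‖y - z‖)
    (v w : ℝ → EuclideanSpace ℝ (Fin d) → EuclideanSpace ℝ (Fin m))
    (hvmeas : Measurable (Function.uncurry v)) (hwmeas : Measurable (Function.uncurry w))
    (hbdd : ∃ M : ℝ, ∀ t ∈ Set.Ico (0:ℝ) T, ∀ x ∈ O,
      (‖v t x‖ + ‖w t x‖) / V t x * Real.sqrt (T - t) ≤ M) :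
    ∀ lam > (0:ℝ), ∀ t ∈ Set.Ico (0:ℝ) T, ∀ x ∈ O,
      ∀ S : ℝ, (∀ s ∈ Set.Ico (0:ℝ) T, ∀ y ∈ O,
        Real.exp (lam * s) * ‖v s y - w s y‖ / V s y * Real.sqrt (T - s) ≤ S) →
      (∫⁻ ω, (∫⁻ r in Set.Ioc t T,
          ENNReal.ofReal (|f r (X t x r ω) (v r (X t x r ω))
            - f r (X t x r ω) (w r (X t x r ω))| * ‖Z t x r ω‖)) ∂P)
        ≤ ENNReal.ofReal (c * L * Real.sqrt (Real.pi ^ 3 / (4 * lam * (T - t)))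
            * V t x * Real.exp (-lam * t) * S) := by
  intro lam hlam t ht x hx S hS
  obtain ⟨ht0, htT⟩ := ht
  have hτ : 0 < T - t := by linarith
  have hS0 : 0 ≤ S := by
    refine le_trans ?_ (hS t ⟨ht0, htT⟩ x hx)
    have h1 : 0 ≤ Real.exp (lam * t) * ‖v t x - w t x‖ / V t x :=
      div_nonneg (by positivity) (hVpos t x).le
    positivity
  -- measurability of the joint integrand
  have hXm := hXmeas t x
  have hZm := hZmeas t x
  have h1 : Measurable (fun p : ℝ × Ω => (p.1, X t x p.1 p.2)) :=
    measurable_fst.prodMk hXm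
  have hv' : Measurable (fun p : ℝ × Ω => v p.1 (X t x p.1 p.2)) := hvmeas.comp h1
  have hw' : Measurable (fun p : ℝ × Ω => w p.1 (X t x p.1 p.2)) := hwmeas.comp h1
  have hfv : Measurable (fun p : ℝ × Ω => f p.1 (X t x p.1 p.2) (v p.1 (X t x p.1 p.2))) :=
    hfmeas.comp (measurable_fst.prodMk (hXm.prodMk hv'))
  have hfw : Measurable (fun p : ℝ × Ω => f p.1 (X t x p.1 p.2) (w p.1 (X t x p.1 p.2))) :=
    hfmeas.comp (measurable_fst.prodMk (hXm.prodMk hw'))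
  have hZn : Measurable (fun p : ℝ × Ω => ‖Z t x p.1 p.2‖) := hZm.norm
  have hF : Measurable (fun p : ℝ × Ω =>
      ENNReal.ofReal (|f p.1 (X t x p.1 p.2) (v p.1 (X t x p.1 p.2))
        - f p.1 (X t x p.1 p.2) (w p.1 (X t x p.1 p.2))| * ‖Z t x p.1 p.2‖)) :=
    (((hfv.sub hfw).abs).mul hZn).ennreal_ofReal
  -- Tonelli
  have hswap : (∫⁻ ω, (∫⁻ r in Set.Ioc t T,
        ENNReal.ofReal (|f r (X t x r ω) (v r (X t x r ω))
          - f r (X t x r ω) (w r (X t x r ω))| * ‖Z t x r ω‖)) ∂P)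
      = ∫⁻ r in Set.Ioc t T, (∫⁻ ω,
        ENNReal.ofReal (|f r (X t x r ω) (v r (X t x r ω))
          - f r (X t x r ω) (w r (X t x r ω))| * ‖Z t x r ω‖) ∂P) := by
    exact lintegral_lintegral_swap (hF.comp measurable_swap).aemeasurable
  have hIoo : (∫⁻ r in Set.Ioc t T, (∫⁻ ω,
        ENNReal.ofReal (|f r (X t x r ω) (v r (X t x r ω))
          - f r (X t x r ω) (w r (X t x r ω))| * ‖Z t x r ω‖) ∂P))
      = ∫⁻ r in Set.Ioo t T, (∫⁻ ω,
        ENNReal.ofReal (|f r (X t x r ω) (v r (X t x r ω))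
          - f r (X t x r ω) (w r (X t x r ω))| * ‖Z t x r ω‖) ∂P) :=
    (setLIntegral_congr Ioo_ae_eq_Ioc).symm
  rw [hswap, hIoo]
  -- pointwise-in-r bound
  have key : ∀ r ∈ Ioo t T, (∫⁻ ω,
      ENNReal.ofReal (|f r (X t x r ω) (v r (X t x r ω))
        - f r (X t x r ω) (w r (X t x r ω))| * ‖Z t x r ω‖) ∂P)
      ≤ ENNReal.ofReal (L * S * (c * V t x)) *
        ENNReal.ofReal (Real.exp (-lam * r) / (Real.sqrt (r - t) * Real.sqrt (T - r))) := by
    intro r hr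
    have htr : t < r := hr.1
    have hrT : r < T := hr.2
    have hr0 : 0 ≤ r := le_trans ht0 htr.le
    have hsq : 0 < Real.sqrt (T - r) := Real.sqrt_pos.2 (by linarith)
    have hE : 0 < Real.exp (lam * r) := Real.exp_pos _
    have step1 : (∫⁻ ω, ENNReal.ofReal (|f r (X t x r ω) (v r (X t x r ω))
          - f r (X t x r ω) (w r (X t x r ω))| * ‖Z t x r ω‖) ∂P)
        ≤ ∫⁻ ω, ENNReal.ofReal (L * S / (Real.exp (lam * r) * Real.sqrt (T - r))) *
            ENNReal.ofReal (V r (X t x r ω) * ‖Z t x r ω‖) ∂P := by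
      apply lintegral_mono
      intro ω
      dsimp only
      rw [← ENNReal.ofReal_mul (by positivity)]
      apply ENNReal.ofReal_le_ofReal
      set y := X t x r ω with hy
      have hVr := hVpos r y
      have hΔ : ‖v r y - w r y‖ ≤ S * V r y / (Real.exp (lam * r) * Real.sqrt (T - r)) := by
        have h2 := hS r ⟨hr0, hrT⟩ y (hXO t x r ω)
        rw [div_mul_eq_mul_div, div_le_iff₀ hVr] at h2
        rw [le_div_iff₀ (by positivity)]
        nlinarith [norm_nonneg (v r y - w r y), hsq, hE]
      calc |f r y (v r y) - f r y (w r y)| * ‖Z t x r ω‖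
          ≤ (L * ‖v r y - w r y‖) * ‖Z t x r ω‖ :=
            mul_le_mul_of_nonneg_right (hLip r ⟨hr0, hrT⟩ y (hXO t x r ω) _ _) (norm_nonneg _)
        _ ≤ (L * (S * V r y / (Real.exp (lam * r) * Real.sqrt (T - r)))) * ‖Z t x r ω‖ := by
            apply mul_le_mul_of_nonneg_right _ (norm_nonneg _)
            exact mul_le_mul_of_nonneg_left hΔ hL.le
        _ = L * S / (Real.exp (lam * r) * Real.sqrt (T - r)) * (V r y * ‖Z t x r ω‖) := by
            ring
    have step2 : (∫⁻ ω, ENNReal.ofReal (L * S / (Real.exp (lam * r) * Real.sqrt (T - r))) *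
            ENNReal.ofReal (V r (X t x r ω) * ‖Z t x r ω‖) ∂P)
        ≤ ENNReal.ofReal (L * S / (Real.exp (lam * r) * Real.sqrt (T - r))) *
            ENNReal.ofReal (c / Real.sqrt (r - t) * V t x) := by
      rw [lintegral_const_mul' _ _ ENNReal.ofReal_ne_top]
      exact mul_le_mul_right (hmom t r x ht0 htr hrT.le hx) _
    refine le_trans (le_trans step1 step2) (le_of_eq ?_)
    have hn1 : (0:ℝ) ≤ L * S / (Real.exp (lam * r) * Real.sqrt (T - r)) :=
      div_nonneg (mul_nonneg hL.le hS0) (by positivity)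
    have hn2 : (0:ℝ) ≤ L * S * (c * V t x) :=
      mul_nonneg (mul_nonneg hL.le hS0) (mul_nonneg hc.le (hVpos t x).le)
    rw [← ENNReal.ofReal_mul hn1, ← ENNReal.ofReal_mul hn2]
    apply congrArg
    rw [show -lam * r = -(lam * r) by ring, Real.exp_neg]
    have h1 : Real.sqrt (r - t) ≠ 0 := (Real.sqrt_pos.2 (by linarith)).ne'
    field_simp
  calc (∫⁻ r in Ioo t T, (∫⁻ ω,
        ENNReal.ofReal (|f r (X t x r ω) (v r (X t x r ω))
          - f r (X t x r ω) (w r (X t x r ω))| * ‖Z t x r ω‖) ∂P))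
      ≤ ∫⁻ r in Ioo t T, ENNReal.ofReal (L * S * (c * V t x)) *
          ENNReal.ofReal (Real.exp (-lam * r) / (Real.sqrt (r - t) * Real.sqrt (T - r))) := by
        apply setLIntegral_mono _ key
        apply Measurable.const_mul
        apply Measurable.ennreal_ofReal
        exact (Real.measurable_exp.comp (measurable_const.mul measurable_id)).div
          (((measurable_id.sub measurable_const).sqrt).mul
            ((measurable_const.sub measurable_id).sqrt))
    _ = ENNReal.ofReal (L * S * (c * V t x)) *
          ∫⁻ r in Ioo t T,
            ENNReal.ofReal (Real.exp (-lam * r) / (Real.sqrt (r - t) * Real.sqrt (T - r))) :=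
        lintegral_const_mul' _ _ ENNReal.ofReal_ne_top
    _ ≤ ENNReal.ofReal (L * S * (c * V t x)) *
          ENNReal.ofReal (Real.sqrt (Real.pi ^ 3 / (4 * lam * (T - t))) * Real.exp (-lam * t)) :=
        mul_le_mul_right (singular_bound lam t T hlam (by linarith)) _
    _ ≤ ENNReal.ofReal (c * L * Real.sqrt (Real.pi ^ 3 / (4 * lam * (T - t)))
          * V t x * Real.exp (-lam * t) * S) := by
        rw [← ENNReal.ofReal_mul
          (mul_nonneg (mul_nonneg hL.le hS0) (mul_nonneg hc.le (hVpos t x).le))]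
        apply ENNReal.ofReal_le_ofReal
        apply le_of_eq; ring
end
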